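/- Let G be a group, g ∈ G, h ∈ G_α, and k > l ≥ 1 with α ≤ k − l. Suppose a ∈ G_l/G_{l+α} and b ∈ G_{l+α−1}/G_{l+α}. Then in G/G_{l+α} one has [ga, hb] = [g, h], where [x,y] = x⁻¹y⁻¹xy. -/

import Mathlib

/-- `lcs G k` is the `k`-th term `G_k` of the lower central series, 1-indexed:
`G_1 = G`, `G_{k+1} = [G, G_k]`. -/
def lcs (G : Type*) [Group G] (k : ℕ) : Subgroup G := Subgroup.lowerCentralSeries (⊤ : Subgroup G) (k - 1)

instance lcs_normal (G : Type*) [Group G] (k : ℕ) : (lcs G k).Normal :=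
  Subgroup.lowerCentralSeries_normal ⊤ (k - 1)

lemma lcs_antitone {G : Type*} [Group G] {k l : ℕ} (h : k ≤ l) : lcs G l ≤ lcs G k :=
  by unfold lcs; apply Subgroup.lowerCentralSeries_antitone; exact Nat.sub_le_sub_right h 1

/-- The natural projection `G/G_l → G/G_k` for `k ≤ l`. -/
def lcsProj (G : Type*) [Group G] (l k : ℕ) (h : k ≤ l) :
    G ⧸ lcs G l →* G ⧸ lcs G k :=
  QuotientGroup.map _ _ (MonoidHom.id G) (fun _ hx => lcs_antitone h hx)
/-- The commutator used in the paper: `[x,y] = x⁻¹y⁻¹xy`. -/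
def pcomm {G : Type*} [Group G] (x y : G) : G := x⁻¹ * y⁻¹ * x * y

open Subgroup
open scoped commutatorElement

/-- Three subgroups lemma, relative version: if `⁅⁅H₂,H₃⁆,H₁⁆ ≤ N` and `⁅⁅H₃,H₁⁆,H₂⁆ ≤ N`
for a normal subgroup `N`, then `⁅⁅H₁,H₂⁆,H₃⁆ ≤ N`. -/
lemma three_subgroups_le {G : Type*} [Group G] {H₁ H₂ H₃ N : Subgroup G} [N.Normal]
    (h1 : ⁅⁅H₂, H₃⁆, H₁⁆ ≤ N) (h2 : ⁅⁅H₃, H₁⁆, H₂⁆ ≤ N) : ⁅⁅H₁, H₂⁆, H₃⁆ ≤ N := by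
  have key : ∀ A B C : Subgroup G, ⁅⁅A, B⁆, C⁆ ≤ N ↔
      ⁅⁅A.map (QuotientGroup.mk' N), B.map (QuotientGroup.mk' N)⁆,
        C.map (QuotientGroup.mk' N)⁆ = ⊥ := by
    intro A B C
    rw [← Subgroup.map_commutator, ← Subgroup.map_commutator,
      Subgroup.map_eq_bot_iff, QuotientGroup.ker_mk']
  rw [key] at h1 h2 ⊢
  exact commutator_commutator_eq_bot_of_rotate h1 h2

/-- `⁅L_m, L_n⁆ ≤ L_{m+n+1}` for the (0-indexed) lower central series. -/
lemma lcsL_comm_le (G : Type*) [Group G] (n m : ℕ) :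
    ⁅Subgroup.lowerCentralSeries (⊤ : Subgroup G) m, Subgroup.lowerCentralSeries (⊤ : Subgroup G) n⁆ ≤ Subgroup.lowerCentralSeries (⊤ : Subgroup G) (m + n + 1) := by
  induction n generalizing m with
  | zero => exact le_of_eq (Subgroup.lowerCentralSeries_succ (S := (⊤ : Subgroup G)) m).symm
  | succ n ih =>
    rw [Subgroup.lowerCentralSeries_succ (S := (⊤ : Subgroup G)) n]
    refine le_trans (commutator_comm_le _ _) (three_subgroups_le ?_ ?_)
    · refine le_trans (commutator_mono (le_trans (commutator_comm_le _ _)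
        (le_of_eq (Subgroup.lowerCentralSeries_succ (S := (⊤ : Subgroup G)) m).symm)) le_rfl) ?_
      have := ih (m + 1)
      rwa [show m + 1 + n + 1 = m + (n+1) + 1 by omega] at this
    · refine le_trans (commutator_mono (ih m) le_rfl) ?_
      exact le_of_eq (Subgroup.lowerCentralSeries_succ (S := (⊤ : Subgroup G)) (m + n + 1)).symm

/-- 1-indexed version: `⁅G_i, G_j⁆ ≤ G_{i+j}`. -/
lemma lcs_comm_le (G : Type*) [Group G] (i j : ℕ) : ⁅lcs G i, lcs G j⁆ ≤ lcs G (i + j) :=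
  le_trans (lcsL_comm_le G (j-1) (i-1)) (Subgroup.lowerCentralSeries_antitone (S := ⊤) (by omega))

lemma pcomm_mem {G : Type*} [Group G] {x y : G} {i j : ℕ}
    (hx : x ∈ lcs G i) (hy : y ∈ lcs G j) : pcomm x y ∈ lcs G (i + j) := by
  have hxy : pcomm x y = ⁅x⁻¹, y⁻¹⁆ := by simp [pcomm, commutatorElement_def]
  rw [hxy]
  exact lcs_comm_le G i j
    (commutator_mem_commutator ((lcs G i).inv_mem hx) ((lcs G j).inv_mem hy))

lemma mem_lcs_one {G : Type*} [Group G] (x : G) : x ∈ lcs G 1 := by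
  show x ∈ Subgroup.lowerCentralSeries (⊤ : Subgroup G) 0
  simp

/-- Key commutator computation: for `g ∈ G`, `h ∈ G_α`, `a ∈ G_l`, `b ∈ G_{l+α-1}`,
one has `[ga, hb] = [g, h]` in `G/G_{l+α}` (with `k > l ≥ 1`, `α ≤ k - l`). -/
theorem stmt12 (G : Type*) [Group G] (g h a b : G) (k l α : ℕ)
    (hkl : l < k) (hl : 1 ≤ l) (hα : α ≤ k - l)
    (hh : h ∈ lcs G α) (ha : a ∈ lcs G l) (hb : b ∈ lcs G (l + α - 1)) :
    (QuotientGroup.mk (pcomm (g * a) (h * b)) : G ⧸ lcs G (l + α)) =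
      QuotientGroup.mk (pcomm g h) := by
  set N := lcs G (l + α) with hN
  -- `b` is "central" modulo `N`: any commutator with `b` lies in `N`.
  have memb : ∀ x : G, pcomm x b ∈ N := fun x =>
    lcs_antitone (by omega) (pcomm_mem (mem_lcs_one x) hb)
  have m3 : pcomm a h ∈ N := pcomm_mem ha hh
  have hC : pcomm g h ∈ lcs G (1 + α) := pcomm_mem (mem_lcs_one g) hh
  have m2 : pcomm (pcomm g h) a ∈ N := lcs_antitone (by omega) (pcomm_mem hC ha)
  set w : G := pcomm g h * pcomm (pcomm g h) a * pcomm a h with hw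
  -- purely formal commutator identity in `G`
  have key : pcomm (g * a) (h * b) = pcomm (g * a) b * (w * pcomm w b) := by
    simp only [pcomm, hw]
    group
  have e1 : (QuotientGroup.mk (pcomm (g*a) b) : G ⧸ N) = 1 :=
    (QuotientGroup.eq_one_iff _).2 (memb _)
  have e2 : (QuotientGroup.mk (pcomm w b) : G ⧸ N) = 1 :=
    (QuotientGroup.eq_one_iff _).2 (memb _)
  have e3 : (QuotientGroup.mk (pcomm (pcomm g h) a) : G ⧸ N) = 1 :=
    (QuotientGroup.eq_one_iff _).2 m2
  have e4 : (QuotientGroup.mk (pcomm a h) : G ⧸ N) = 1 :=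
    (QuotientGroup.eq_one_iff _).2 m3
  rw [key, hw]
  simp only [QuotientGroup.mk_mul, e1, e2, e3, e4, one_mul, mul_one]
  rw [← hw, e2, mul_one]
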